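/- The relations ∂W'/∂r_{i_u,t} (respectively ∂W'/∂r_{i_u,t}^{−1}, when relevant) lie in the two-sided ideal of ℂQ' generated by the relations ∂W'/∂a for the generating arrows a ∈ Q'₁; i.e. each derivative of W' with respect to an isomorphism arrow is expressible as a sum of elements p·(∂W'/∂a)·q with p, q ∈ ℂQ' and a generating. -/

import Mathlib

noncomputable section
open scoped Classical

structure Quiv : Type 1 where
  V : Type
  A : Type
  [finV : Fintype V]
  [finA : Fintype A]
  s : A → V
  t : A → V

attribute [instance] Quiv.finV Quiv.finA

namespace Quiv

variable (k : Type) [CommRing k] (Q : Quiv)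

inductive PathRel : FreeAlgebra k (Q.V ⊕ Q.A) → FreeAlgebra k (Q.V ⊕ Q.A) → Prop
  | vertex_mul (i j : Q.V) : PathRel
      (FreeAlgebra.ι k (Sum.inl i) * FreeAlgebra.ι k (Sum.inl j))
      (if i = j then FreeAlgebra.ι k (Sum.inl i) else 0)
  | vertex_sum : PathRel (∑ i : Q.V, FreeAlgebra.ι k (Sum.inl i)) 1
  | target_mul (a : Q.A) : PathRel
      (FreeAlgebra.ι k (Sum.inl (Q.t a)) * FreeAlgebra.ι k (Sum.inr a))
      (FreeAlgebra.ι k (Sum.inr a))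
  | source_mul (a : Q.A) : PathRel
      (FreeAlgebra.ι k (Sum.inr a) * FreeAlgebra.ι k (Sum.inl (Q.s a)))
      (FreeAlgebra.ι k (Sum.inr a))

def PathAlg : Type := RingQuot (PathRel k Q)

instance : Ring (PathAlg k Q) := inferInstanceAs (Ring (RingQuot _))
instance : Algebra k (PathAlg k Q) := inferInstanceAs (Algebra k (RingQuot _))

def vtx (i : Q.V) : PathAlg k Q :=
  RingQuot.mkAlgHom k (PathRel k Q) (FreeAlgebra.ι k (Sum.inl i))

def arr (a : Q.A) : PathAlg k Q :=
  RingQuot.mkAlgHom k (PathRel k Q) (FreeAlgebra.ι k (Sum.inr a))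

def pathOf (l : List Q.A) : PathAlg k Q := (l.map (arr k Q)).prod

def Composable (l : List Q.A) : Prop := List.Chain' (fun a b => Q.s a = Q.t b) l

def IsCycle (l : List Q.A) : Prop :=
  l ≠ [] ∧ List.Chain' (fun a b => Q.s a = Q.t b) (l ++ l.take 1)

def IsPathFrom (l : List Q.A) (i j : Q.V) : Prop :=
  Composable Q l ∧ (l = [] → i = j) ∧
    (∀ h : l ≠ [], Q.t (l.head h) = j) ∧ (∀ h : l ≠ [], Q.s (l.getLast h) = i)

def cycDeriv (l : List Q.A) (a : Q.A) : PathAlg k Q :=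
  ∑ i ∈ Finset.range l.length,
    if (l.rotate i).head? = some a then pathOf k Q (l.rotate i).tail else 0

abbrev Potential := List (k × List Q.A)

def Potential.deriv (W : Potential k Q) (a : Q.A) : PathAlg k Q :=
  (W.map fun p => p.1 • cycDeriv k Q p.2 a).sum

def Potential.elem (W : Potential k Q) : PathAlg k Q :=
  (W.map fun p => p.1 • pathOf k Q p.2).sum

inductive JacRel (W : Potential k Q) : PathAlg k Q → PathAlg k Q → Prop
  | deriv (a : Q.A) : JacRel W (Potential.deriv k Q W a) 0

def Jac (W : Potential k Q) : Type := RingQuot (JacRel k Q W)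

instance (W : Potential k Q) : Ring (Jac k Q W) := inferInstanceAs (Ring (RingQuot _))
instance (W : Potential k Q) : Algebra k (Jac k Q W) := inferInstanceAs (Algebra k (RingQuot _))

def jacMk (W : Potential k Q) : PathAlg k Q →ₐ[k] Jac k Q W :=
  RingQuot.mkAlgHom k (JacRel k Q W)

def Potential.memIdeal (W : Potential k Q) (x : PathAlg k Q) : Prop :=
  jacMk k Q W x = 0

def loc (S : Set Q.A) : Quiv where
  V := Q.V
  A := Q.A ⊕ ↥S
  s := Sum.elim Q.s fun a => Q.t a.1
  t := Sum.elim Q.t fun a => Q.s a.1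

inductive LocRel (S : Set Q.A) : PathAlg k (Q.loc S) → PathAlg k (Q.loc S) → Prop
  | inv_mul (a : ↥S) : LocRel S
      (arr k (Q.loc S) (Sum.inr a) * arr k (Q.loc S) (Sum.inl a.1))
      (vtx k (Q.loc S) (Q.s a.1))
  | mul_inv (a : ↥S) : LocRel S
      (arr k (Q.loc S) (Sum.inl a.1) * arr k (Q.loc S) (Sum.inr a))
      (vtx k (Q.loc S) (Q.t a.1))

def LocAlg (S : Set Q.A) : Type := RingQuot (LocRel k Q S)

instance (S : Set Q.A) : Ring (LocAlg k Q S) := inferInstanceAs (Ring (RingQuot _))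
instance (S : Set Q.A) : Algebra k (LocAlg k Q S) := inferInstanceAs (Algebra k (RingQuot _))

def locMk (S : Set Q.A) : PathAlg k (Q.loc S) →ₐ[k] LocAlg k Q S :=
  RingQuot.mkAlgHom k (LocRel k Q S)

def locVtx (S : Set Q.A) (i : Q.V) : LocAlg k Q S := locMk k Q S (vtx k (Q.loc S) i)

def locArr (S : Set Q.A) (x : (Q.loc S).A) : LocAlg k Q S := locMk k Q S (arr k (Q.loc S) x)

def locProd (S : Set Q.A) (l : List (Q.loc S).A) : LocAlg k Q S :=
  locMk k Q S (pathOf k (Q.loc S) l)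

inductive JacLRel (S : Set Q.A) (W : Potential k (Q.loc S)) :
    LocAlg k Q S → LocAlg k Q S → Prop
  | deriv (x : (Q.loc S).A) : JacLRel S W (locMk k Q S (Potential.deriv k (Q.loc S) W x)) 0

def JacL (S : Set Q.A) (W : Potential k (Q.loc S)) : Type := RingQuot (JacLRel k Q S W)

instance (S : Set Q.A) (W : Potential k (Q.loc S)) : Ring (JacL k Q S W) :=
  inferInstanceAs (Ring (RingQuot _))
instance (S : Set Q.A) (W : Potential k (Q.loc S)) : Algebra k (JacL k Q S W) :=
  inferInstanceAs (Algebra k (RingQuot _))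

def jacLMk (S : Set Q.A) (W : Potential k (Q.loc S)) : LocAlg k Q S →ₐ[k] JacL k Q S W :=
  RingQuot.mkAlgHom k (JacLRel k Q S W)

def memIdealL (S : Set Q.A) (W : Potential k (Q.loc S)) (x : LocAlg k Q S) : Prop :=
  jacLMk k Q S W x = 0

def locWeight (S : Set Q.A) (w : Q.A → ℤ) : (Q.loc S).A → ℤ :=
  Sum.elim w fun a => - w a.1

def degPart (S : Set Q.A) (w : Q.A → ℤ) (d : ℤ) : Submodule k (LocAlg k Q S) :=
  Submodule.span k {x | (d = 0 ∧ ∃ i : Q.V, x = locVtx k Q S i) ∨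
    ∃ l : List (Q.loc S).A, (l.map (locWeight Q S w)).sum = d ∧ x = locProd k Q S l}

structure Tiling where
  TV : Type
  [finTV : Fintype TV]
  isWhite : TV → Bool
  whiteOf : Q.A → TV
  blackOf : Q.A → TV
  whiteOf_white : ∀ a, isWhite (whiteOf a) = true
  blackOf_black : ∀ a, isWhite (blackOf a) = false
  cyc : TV → List Q.A
  cyc_isCycle : ∀ v, IsCycle Q (cyc v)
  cyc_nodup : ∀ v, (cyc v).Nodup
  mem_cyc : ∀ v a, a ∈ cyc v ↔ whiteOf a = v ∨ blackOf a = v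

attribute [instance] Tiling.finTV

def Tiling.potential (T : Tiling Q) : Potential k Q :=
  (Finset.univ (α := T.TV)).toList.map fun v =>
    ((if T.isWhite v then (1 : k) else -1), T.cyc v)

structure Aut where
  onV : Q.V ≃ Q.V
  onA : Q.A ≃ Q.A
  s_comm : ∀ a, Q.s (onA a) = onV (Q.s a)
  t_comm : ∀ a, Q.t (onA a) = onV (Q.t a)

structure TAut (T : Tiling Q) extends Aut Q where
  onTV : T.TV ≃ T.TV
  white_comm : ∀ v, T.isWhite (onTV v) = T.isWhite v
  whiteOf_comm : ∀ a, T.whiteOf (onA a) = onTV (T.whiteOf a)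
  blackOf_comm : ∀ a, T.blackOf (onA a) = onTV (T.blackOf a)
  cyc_comm : ∀ v, ∃ m, T.cyc (onTV v) = ((T.cyc v).map onA).rotate m

def Aut.OrderDvd (g : Aut Q) (n : ℕ) : Prop :=
  (∀ i, (⇑g.onV)^[n] i = i) ∧ (∀ a, (⇑g.onA)^[n] a = a)

def Aut.FreeVertexOrbits (g : Aut Q) (n : ℕ) : Prop :=
  ∀ i : Q.V, ∀ m, 0 < m → m < n → (⇑g.onV)^[m] i ≠ i

structure OrbitChoice (g : Aut Q) where
  genArrow : Q.A → Q.A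
  genArrow_orbit : ∀ a, ∃ m, (⇑g.onA)^[m] (genArrow a) = a
  genArrow_comm : ∀ a, genArrow (g.onA a) = genArrow a
  genArrow_idem : ∀ a, genArrow (genArrow a) = genArrow a
  repV : Q.V → Q.V
  repV_orbit : ∀ i, ∃ m, (⇑g.onV)^[m] (repV i) = i
  repV_comm : ∀ i, repV (g.onV i) = repV i
  repV_idem : ∀ i, repV (repV i) = repV i

def sharp (g : Aut Q) (n : ℕ) (C : OrbitChoice Q g) : Quiv where
  V := Q.V
  A := {a : Q.A // C.genArrow a = a} ⊕ ({i : Q.V // C.repV i = i} × Fin (n - 1))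
  s := Sum.elim (fun a => Q.s a.1) fun p => (⇑g.onV)^[p.2.1] p.1.1
  t := Sum.elim (fun a => Q.t a.1) fun p => (⇑g.onV)^[p.2.1 + 1] p.1.1

def isoSet (g : Aut Q) (n : ℕ) (C : OrbitChoice Q g) : Set (sharp Q g n C).A :=
  Set.range Sum.inr

variable (g : Aut Q) (n : ℕ) (C : OrbitChoice Q g)

/-- An isomorphism arrow, viewed as an arrow of the localised quiver. -/
def isoArrLoc (y : {i : Q.V // C.repV i = i} × Fin (n - 1)) :
    ((sharp Q g n C).loc (isoSet Q g n C)).A :=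
  Sum.inl (Sum.inr y)

/-- The inverse of an isomorphism arrow, viewed as an arrow of the localised
quiver. -/
def isoInvLoc (y : {i : Q.V // C.repV i = i} × Fin (n - 1)) :
    ((sharp Q g n C).loc (isoSet Q g n C)).A :=
  Sum.inr ⟨Sum.inr y, ⟨y, rfl⟩⟩

/-- The chosen generating arrow of the orbit of `a`, viewed as an arrow of the
localised quiver. -/
def genLoc (a : Q.A) : ((sharp Q g n C).loc (isoSet Q g n C)).A :=
  Sum.inl (Sum.inl ⟨C.genArrow a, C.genArrow_idem a⟩)

/-- `l` consists solely of isomorphism arrows and their inverses. -/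
def IsIsoList (l : List ((sharp Q g n C).loc (isoSet Q g n C)).A) : Prop :=
  ∀ x ∈ l, (∃ y, x = isoArrLoc Q g n C y) ∨ (∃ y, x = isoInvLoc Q g n C y)

/-- A choice, for every arrow `a` of `Q`, of the connecting paths `p_a` (from
`t(a_j)` to `t(a)`) and `q_a` (from `s(a)` to `s(a_j)`) composed solely of
isomorphism arrows and their inverses, where `a_j` is the chosen generating
arrow of the orbit of `a`. -/
structure ConnData where
  P : Q.A → List ((sharp Q g n C).loc (isoSet Q g n C)).A
  Qc : Q.A → List ((sharp Q g n C).loc (isoSet Q g n C)).A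
  isoP : ∀ a, IsIsoList Q g n C (P a)
  isoQc : ∀ a, IsIsoList Q g n C (Qc a)
  endP : ∀ a, IsPathFrom ((sharp Q g n C).loc (isoSet Q g n C)) (P a)
      (Q.t (C.genArrow a)) (Q.t a)
  endQc : ∀ a, IsPathFrom ((sharp Q g n C).loc (isoSet Q g n C)) (Qc a)
      (Q.s a) (Q.s (C.genArrow a))

/-- The image of an arrow `a` of `Q` under `ξ`, as a list of arrows of the
localised quiver: `p_a ⧺ [a_j] ⧺ q_a`. -/
def xiArrList (cd : ConnData Q g n C) (a : Q.A) :
    List ((sharp Q g n C).loc (isoSet Q g n C)).A :=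
  cd.P a ++ [genLoc Q g n C a] ++ cd.Qc a

/-- The image of a path of `Q` under `ξ`, as a list of arrows of the localised
quiver. -/
def xiList (cd : ConnData Q g n C) (l : List Q.A) :
    List ((sharp Q g n C).loc (isoSet Q g n C)).A :=
  l.flatMap (xiArrList Q g n C cd)

/-- The specification of the algebra homomorphism
`ξ : kQ → kQ'`: it sends constant paths to constant paths, and the arrow `a`
to `p_a a_j q_a`. -/
def XiSpec (cd : ConnData Q g n C)
    (ξ : PathAlg k Q →ₐ[k] LocAlg k (sharp Q g n C) (isoSet Q g n C)) : Prop :=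
  (∀ i : Q.V, ξ (vtx k Q i) = locVtx k (sharp Q g n C) (isoSet Q g n C) i) ∧
  ∀ a : Q.A, ξ (arr k Q a) =
    locProd k (sharp Q g n C) (isoSet Q g n C) (xiArrList Q g n C cd a)

/-- The potential `W' = ξ(W)` on the localised quiver induced by the potential
of a brane tiling. -/
def inducedPotential (T : Tiling Q) (cd : ConnData Q g n C) :
    Potential k ((sharp Q g n C).loc (isoSet Q g n C)) :=
  (Finset.univ (α := T.TV)).toList.map fun v =>
    ((if T.isWhite v then (1 : k) else -1), xiList Q g n C cd (T.cyc v))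

/-- The degree of arrows of `Q^#`: isomorphism arrows have degree `1`, the
generating arrows degree `0` (their formal inverses then get degree `-1`). -/
def sharpWeight : (sharp Q g n C).A → ℤ := Sum.elim (fun _ => 0) fun _ => 1

/-- The rotation of a cycle `l` placing the arrow `a` at the end. -/
def rotTo (l : List Q.A) (a : Q.A) : List Q.A := l.rotate (l.idxOf a + 1)

end Quiv

namespace Quiv

variable (Q : Quiv) (g : Aut Q) (n : ℕ) (C : OrbitChoice Q g)

/-- The potential `W'` (presented as a list of cycles) contains the arrow `x`. -/
def PotContains (W : Potential ℂ ((sharp Q g n C).loc (isoSet Q g n C)))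
    (x : ((sharp Q g n C).loc (isoSet Q g n C)).A) : Prop :=
  ∃ p ∈ W, p.1 ≠ 0 ∧ x ∈ p.2

end Quiv

namespace Quiv

section Aux

variable (k : Type) [CommRing k] (Q : Quiv)

lemma mk_mul (x y : FreeAlgebra k (Q.V ⊕ Q.A)) :
    RingQuot.mkAlgHom k (PathRel k Q) (x * y) =
      RingQuot.mkAlgHom k (PathRel k Q) x * RingQuot.mkAlgHom k (PathRel k Q) y :=
  map_mul _ _ _

lemma vtx_mul_vtx (i j : Q.V) :
    vtx k Q i * vtx k Q j = if i = j then vtx k Q i else 0 := by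
  have h := RingQuot.mkAlgHom_rel k (PathRel.vertex_mul (k := k) (Q := Q) i j)
  rw [map_mul] at h
  unfold vtx
  refine h.trans ?_
  split_ifs
  · exact (if_pos ‹i = j›).symm
  · exact (map_zero _).trans (if_neg ‹¬i = j›).symm

lemma vtx_mul_arr_self (a : Q.A) : vtx k Q (Q.t a) * arr k Q a = arr k Q a := by
  have h := RingQuot.mkAlgHom_rel k (PathRel.target_mul (k := k) (Q := Q) a)
  rw [map_mul] at h
  exact h

lemma arr_mul_vtx_self (a : Q.A) : arr k Q a * vtx k Q (Q.s a) = arr k Q a := by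
  have h := RingQuot.mkAlgHom_rel k (PathRel.source_mul (k := k) (Q := Q) a)
  rw [map_mul] at h
  exact h

lemma vtx_mul_arr_ne {i : Q.V} {a : Q.A} (h : i ≠ Q.t a) :
    vtx k Q i * arr k Q a = 0 := by
  rw [← vtx_mul_arr_self k Q a, ← mul_assoc, vtx_mul_vtx, if_neg h, zero_mul]

lemma arr_mul_vtx_ne {i : Q.V} {a : Q.A} (h : Q.s a ≠ i) :
    arr k Q a * vtx k Q i = 0 := by
  rw [← arr_mul_vtx_self k Q a, mul_assoc, vtx_mul_vtx, if_neg h, mul_zero]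

lemma pathOf_nil : pathOf k Q [] = 1 := rfl

lemma pathOf_cons (a : Q.A) (l : List Q.A) :
    pathOf k Q (a :: l) = arr k Q a * pathOf k Q l := by
  unfold pathOf
  rw [List.map_cons, List.prod_cons]

lemma pathOf_append (l₁ l₂ : List Q.A) :
    pathOf k Q (l₁ ++ l₂) = pathOf k Q l₁ * pathOf k Q l₂ := by
  unfold pathOf
  rw [List.map_append, List.prod_append]

lemma vtx_mul_pathOf {l : List Q.A} (h : l ≠ []) {i : Q.V}
    (hh : Q.t (l.head h) = i) : vtx k Q i * pathOf k Q l = pathOf k Q l := by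
  obtain ⟨a, t, rfl⟩ := List.exists_cons_of_ne_nil h
  rw [pathOf_cons, ← mul_assoc]
  simp only [List.head_cons] at hh
  rw [← hh, vtx_mul_arr_self]

lemma pathOf_mul_vtx {l : List Q.A} (h : l ≠ []) {i : Q.V}
    (hh : Q.s (l.getLast h) = i) : pathOf k Q l * vtx k Q i = pathOf k Q l := by
  have hd : l = l.dropLast ++ [l.getLast h] := (List.dropLast_append_getLast h).symm
  rw [hd, pathOf_append, mul_assoc]
  congr 1
  rw [pathOf_cons, pathOf_nil, mul_one, ← hh, arr_mul_vtx_self]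

lemma vtx_mul_pathOf_ne {l : List Q.A} (h : l ≠ []) {i : Q.V}
    (hh : i ≠ Q.t (l.head h)) : vtx k Q i * pathOf k Q l = 0 := by
  obtain ⟨a, t, rfl⟩ := List.exists_cons_of_ne_nil h
  simp only [List.head_cons] at hh
  rw [pathOf_cons, ← mul_assoc, vtx_mul_arr_ne k Q hh, zero_mul]

lemma pathOf_mul_vtx_ne {l : List Q.A} (h : l ≠ []) {i : Q.V}
    (hh : Q.s (l.getLast h) ≠ i) : pathOf k Q l * vtx k Q i = 0 := by
  have hd : l = l.dropLast ++ [l.getLast h] := (List.dropLast_append_getLast h).symm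
  rw [hd, pathOf_append, mul_assoc, pathOf_cons, pathOf_nil, mul_one,
    arr_mul_vtx_ne k Q hh, mul_zero]

end Aux

end Quiv
namespace Quiv

section Aux2

variable (k : Type) [CommRing k] (Q : Quiv)

lemma Composable_of_isCycle {l : List Q.A} (h : IsCycle Q l) : Composable Q l :=
  (List.isChain_append.1 h.2).1

lemma isCycle_s_getLast {l : List Q.A} (h : IsCycle Q l) :
    Q.s (l.getLast h.1) = Q.t (l.head h.1) := by
  have h3 := (List.isChain_append.1 h.2).2.2
  apply h3
  · rw [List.getLast?_eq_getLast h.1]; rfl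
  · obtain ⟨a, t, rfl⟩ := List.exists_cons_of_ne_nil h.1
    simp

lemma isCycle_of (Q : Quiv) {l : List Q.A} (h : l ≠ []) (hc : Composable Q l)
    (hlh : Q.s (l.getLast h) = Q.t (l.head h)) : IsCycle Q l := by
  refine ⟨h, List.isChain_append.2 ⟨hc, ?_, ?_⟩⟩
  · obtain ⟨a, t, rfl⟩ := List.exists_cons_of_ne_nil h
    rcases t with _ | ⟨b, u⟩ <;> simp
  · intro x hx y hy
    rw [List.getLast?_eq_getLast h, Option.mem_def, Option.some_inj] at hx
    obtain ⟨a, t, rfl⟩ := List.exists_cons_of_ne_nil h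
    have ht : List.take 1 (a :: t) = [a] := rfl
    rw [ht, List.head?_cons, Option.mem_def, Option.some_inj] at hy
    subst hx; subst hy
    simpa using hlh

lemma isCycle_rotate_one {l : List Q.A} (h : IsCycle Q l) : IsCycle Q (l.rotate 1) := by
  obtain ⟨x, xs, rfl⟩ := List.exists_cons_of_ne_nil h.1
  rw [List.rotate_cons_succ, List.rotate_zero]
  rcases xs with _ | ⟨y, t⟩
  · simpa using h
  have h3 : List.Chain' (fun a b => Q.s a = Q.t b) (x :: y :: (t ++ [x])) := by
    simpa using h.2
  obtain ⟨hxy, hc⟩ := List.isChain_cons_cons.1 h3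
  refine ⟨by simp, ?_⟩
  have hgoal : List.Chain' (fun a b => Q.s a = Q.t b) ((y :: (t ++ [x])) ++ [y]) := by
    refine hc.append (List.isChain_singleton y) ?_
    intro a ha b hb
    have : (y :: (t ++ [x])) = (y :: t) ++ [x] := by simp
    rw [this, List.getLast?_concat, Option.mem_def, Option.some_inj] at ha
    simp only [Option.mem_def, List.head?_cons, Option.some_inj] at hb
    subst ha; subst hb
    exact hxy
  simpa using hgoal

lemma isCycle_rotate {l : List Q.A} (h : IsCycle Q l) (m : ℕ) : IsCycle Q (l.rotate m) := by
  induction m with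
  | zero => simpa using h
  | succ m ih =>
      have : l.rotate (m + 1) = (l.rotate m).rotate 1 := by
        rw [List.rotate_rotate]
      rw [this]
      exact isCycle_rotate_one Q ih

lemma cycDeriv_eq_zero {l : List Q.A} {a : Q.A} (h : a ∉ l) :
    cycDeriv k Q l a = 0 := by
  unfold cycDeriv
  apply Finset.sum_eq_zero
  intro i _
  rw [if_neg]
  intro hhead
  exact h (List.mem_rotate.1 (List.mem_of_mem_head? hhead))

lemma rotate_head_cons_tail {l : List Q.A} {i : ℕ} (h : l.rotate i ≠ []) :
    (l.rotate i).head h :: (l.rotate i).tail = l.rotate i :=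
  List.cons_head_tail h

lemma rotate_tail_concat {l : List Q.A} {i : ℕ} (h : l.rotate i ≠ []) :
    (l.rotate i).tail ++ [(l.rotate i).head h] = l.rotate (i + 1) := by
  conv_rhs => rw [← List.rotate_rotate l i 1]
  conv_rhs => rw [← rotate_head_cons_tail (h := h)]
  rw [List.rotate_cons_succ, List.rotate_zero]

lemma sum_arr_cycDeriv (l : List Q.A) :
    ∑ x : Q.A, arr k Q x * cycDeriv k Q l x =
      ∑ i ∈ Finset.range l.length, pathOf k Q (l.rotate i) := by
  unfold cycDeriv
  simp only [Finset.mul_sum]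
  rw [Finset.sum_comm]
  apply Finset.sum_congr rfl
  intro i hi
  have hne : l.rotate i ≠ [] := by
    rw [← List.length_pos_iff_ne_nil, List.length_rotate]
    exact lt_of_le_of_lt (Nat.zero_le i) (Finset.mem_range.1 hi)
  have hhead : (l.rotate i).head? = some ((l.rotate i).head hne) :=
    List.head?_eq_head hne
  have : ∀ x : Q.A, arr k Q x *
      (if (l.rotate i).head? = some x then pathOf k Q (l.rotate i).tail else 0) =
      (if (l.rotate i).head hne = x then arr k Q x * pathOf k Q (l.rotate i).tail else 0) := by
    intro x
    rw [mul_ite, mul_zero, hhead]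
    simp [eq_comm]
  rw [Finset.sum_congr rfl fun x _ => this x, Finset.sum_ite_eq]
  simp only [Finset.mem_univ, if_pos]
  rw [← pathOf_cons, rotate_head_cons_tail]

lemma sum_cycDeriv_arr (l : List Q.A) :
    ∑ x : Q.A, cycDeriv k Q l x * arr k Q x =
      ∑ i ∈ Finset.range l.length, pathOf k Q (l.rotate i) := by
  unfold cycDeriv
  simp only [Finset.sum_mul]
  rw [Finset.sum_comm]
  have step : ∀ i ∈ Finset.range l.length,
      (∑ x : Q.A, (if (l.rotate i).head? = some x then pathOf k Q (l.rotate i).tail else 0) *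
        arr k Q x) = pathOf k Q (l.rotate (i + 1)) := by
    intro i hi
    have hne : l.rotate i ≠ [] := by
      rw [← List.length_pos_iff_ne_nil, List.length_rotate]
      exact lt_of_le_of_lt (Nat.zero_le i) (Finset.mem_range.1 hi)
    have hhead : (l.rotate i).head? = some ((l.rotate i).head hne) :=
      List.head?_eq_head hne
    have : ∀ x : Q.A,
        (if (l.rotate i).head? = some x then pathOf k Q (l.rotate i).tail else 0) * arr k Q x =
        (if (l.rotate i).head hne = x then pathOf k Q (l.rotate i).tail * arr k Q x else 0) := by
      intro x
      rw [ite_mul, zero_mul, hhead]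
      simp [eq_comm]
    rw [Finset.sum_congr rfl fun x _ => this x, Finset.sum_ite_eq]
    simp only [Finset.mem_univ, if_pos]
    rw [← rotate_tail_concat (h := hne), pathOf_append, pathOf_cons, pathOf_nil, mul_one]
  rw [Finset.sum_congr rfl step]
  -- reindex the cyclic sum
  set f : ℕ → PathAlg k Q := fun j => pathOf k Q (l.rotate j) with hf
  have e1 := Finset.sum_range_succ' f l.length
  have e2 := Finset.sum_range_succ f l.length
  have e3 : f l.length = f 0 := by
    simp only [hf, List.rotate_length, List.rotate_zero]
  have e4 : (∑ i ∈ Finset.range l.length, f (i + 1)) + f 0 =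
      (∑ i ∈ Finset.range l.length, f i) + f 0 := by
    rw [← e1, e2, e3]
  exact add_right_cancel e4

end Aux2

end Quiv
namespace Quiv

section Aux3

variable (k : Type) [CommRing k] (Q : Quiv)

lemma two_le_length_of_mem {l : List Q.A} {a : Q.A} (hc : l ≠ []) (hne : l ≠ [a])
    (hmem : a ∈ l) : 2 ≤ l.length := by
  rcases l with _ | ⟨b, bs⟩
  · simp at hc
  rcases bs with _ | ⟨c, cs⟩
  · simp only [List.mem_singleton] at hmem
    subst hmem
    exact absurd rfl hne
  · simp only [List.length_cons]
    omega

lemma cycDeriv_mul_vtx {l : List Q.A} {a : Q.A} (hc : IsCycle Q l) (hne : l ≠ [a]) :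
    cycDeriv k Q l a * vtx k Q (Q.t a) = cycDeriv k Q l a := by
  unfold cycDeriv
  rw [Finset.sum_mul]
  apply Finset.sum_congr rfl
  intro i _
  rw [ite_mul, zero_mul]
  by_cases hcond : (l.rotate i).head? = some a
  swap
  · simp [hcond]
  rw [if_pos hcond, if_pos hcond]
  have hrot_ne : l.rotate i ≠ [] := by
    intro h; rw [h] at hcond; simp at hcond
  have hhead : (l.rotate i).head hrot_ne = a := by
    rw [List.head?_eq_head hrot_ne] at hcond
    exact Option.some_inj.1 hcond
  have hmem : a ∈ l := List.mem_rotate.1 (List.mem_of_mem_head? hcond)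
  have hlen : 2 ≤ l.length := two_le_length_of_mem Q hc.1 hne hmem
  have htail_ne : (l.rotate i).tail ≠ [] := by
    rw [← List.length_pos_iff_ne_nil, List.length_tail, List.length_rotate]
    omega
  have hcyc := isCycle_rotate Q hc i
  have hsl := isCycle_s_getLast Q hcyc
  apply pathOf_mul_vtx k Q htail_ne
  obtain ⟨b, t, hbt⟩ := List.exists_cons_of_ne_nil hrot_ne
  have ht_ne : t ≠ [] := by
    intro h
    apply htail_ne
    rw [hbt, h]
    rfl
  have h1 : (l.rotate i).tail.getLast htail_ne = t.getLast ht_ne := by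
    simp only [hbt, List.tail_cons]
  have h2 : (l.rotate i).getLast hcyc.1 = t.getLast ht_ne := by
    simp only [hbt]
    exact List.getLast_cons ht_ne
  rw [h1, ← h2, hsl, hhead]

lemma vtx_mul_cycDeriv {l : List Q.A} {a : Q.A} (hc : IsCycle Q l) (hne : l ≠ [a]) :
    vtx k Q (Q.s a) * cycDeriv k Q l a = cycDeriv k Q l a := by
  unfold cycDeriv
  rw [Finset.mul_sum]
  apply Finset.sum_congr rfl
  intro i _
  rw [mul_ite, mul_zero]
  by_cases hcond : (l.rotate i).head? = some a
  swap
  · simp [hcond]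
  rw [if_pos hcond, if_pos hcond]
  have hrot_ne : l.rotate i ≠ [] := by
    intro h; rw [h] at hcond; simp at hcond
  have hhead : (l.rotate i).head hrot_ne = a := by
    rw [List.head?_eq_head hrot_ne] at hcond
    exact Option.some_inj.1 hcond
  have hmem : a ∈ l := List.mem_rotate.1 (List.mem_of_mem_head? hcond)
  have hlen : 2 ≤ l.length := two_le_length_of_mem Q hc.1 hne hmem
  have htail_ne : (l.rotate i).tail ≠ [] := by
    rw [← List.length_pos_iff_ne_nil, List.length_tail, List.length_rotate]
    omega
  have hcomp : Composable Q (l.rotate i) :=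
    Composable_of_isCycle Q (isCycle_rotate Q hc i)
  have hchain : List.Chain' (fun x y => Q.s x = Q.t y)
      ((l.rotate i).head hrot_ne :: (l.rotate i).tail) := by
    rw [rotate_head_cons_tail (h := hrot_ne)]
    exact hcomp
  have hrel := (List.isChain_cons.1 hchain).1
  apply vtx_mul_pathOf k Q htail_ne
  have := hrel ((l.rotate i).tail.head htail_ne) (List.head?_eq_head htail_ne)
  rw [hhead] at this
  exact this.symm

lemma vtx_mul_sumRot {l : List Q.A} (hc : IsCycle Q l) (v : Q.V) :
    vtx k Q v * (∑ i ∈ Finset.range l.length, pathOf k Q (l.rotate i)) =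
      (∑ i ∈ Finset.range l.length, pathOf k Q (l.rotate i)) * vtx k Q v := by
  rw [Finset.mul_sum, Finset.sum_mul]
  apply Finset.sum_congr rfl
  intro i _
  have hrot_ne : l.rotate i ≠ [] := by
    rw [← List.length_pos_iff_ne_nil, List.length_rotate, List.length_pos_iff_ne_nil]
    exact hc.1
  have hcyc := isCycle_rotate Q hc i
  have hsl := isCycle_s_getLast Q hcyc
  by_cases hv : v = Q.t ((l.rotate i).head hrot_ne)
  · rw [vtx_mul_pathOf k Q hrot_ne hv.symm, pathOf_mul_vtx k Q hrot_ne (by rw [hsl, ← hv])]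
  · rw [vtx_mul_pathOf_ne k Q hrot_ne hv,
      pathOf_mul_vtx_ne k Q hrot_ne (by rw [hsl]; exact fun h => hv h.symm)]

/-- Sum of all rotations of all cycles of a potential. -/
def sumRotP (W : Potential k Q) : PathAlg k Q :=
  (W.map fun p => p.1 • ∑ i ∈ Finset.range p.2.length, pathOf k Q (p.2.rotate i)).sum

lemma deriv_nil (a : Q.A) : Potential.deriv k Q ([] : Potential k Q) a = 0 := rfl

lemma deriv_cons (p : k × List Q.A) (W : Potential k Q) (a : Q.A) :
    Potential.deriv k Q (p :: W) a =
      p.1 • cycDeriv k Q p.2 a + Potential.deriv k Q W a := by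
  unfold Potential.deriv
  rw [List.map_cons, List.sum_cons]

lemma sum_arr_deriv (W : Potential k Q) :
    ∑ x : Q.A, arr k Q x * Potential.deriv k Q W x = sumRotP k Q W := by
  induction W with
  | nil => simp [deriv_nil, sumRotP]
  | cons p W ih =>
      simp only [deriv_cons, mul_add, Finset.sum_add_distrib, ih, sumRotP, List.map_cons,
        List.sum_cons]
      congr 1
      rw [← sum_arr_cycDeriv k Q p.2, Finset.smul_sum]
      apply Finset.sum_congr rfl
      intro x _
      rw [mul_smul_comm]

lemma sum_deriv_arr (W : Potential k Q) :
    ∑ x : Q.A, Potential.deriv k Q W x * arr k Q x = sumRotP k Q W := by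
  induction W with
  | nil => simp [deriv_nil, sumRotP]
  | cons p W ih =>
      simp only [deriv_cons, add_mul, Finset.sum_add_distrib, ih, sumRotP, List.map_cons,
        List.sum_cons]
      congr 1
      rw [← sum_cycDeriv_arr k Q p.2, Finset.smul_sum]
      apply Finset.sum_congr rfl
      intro x _
      rw [smul_mul_assoc]

lemma vtx_mul_sumRotP (W : Potential k Q) (hW : ∀ p ∈ W, IsCycle Q p.2) (v : Q.V) :
    vtx k Q v * sumRotP k Q W = sumRotP k Q W * vtx k Q v := by
  induction W with
  | nil => simp [sumRotP]
  | cons p W ih =>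
      simp only [sumRotP, List.map_cons, List.sum_cons, mul_add, add_mul]
      congr 1
      · rw [mul_smul_comm, smul_mul_assoc, vtx_mul_sumRot k Q (hW p (by simp)) v]
      · exact ih fun q hq => hW q (by simp [hq])

lemma deriv_mul_vtx (W : Potential k Q) {a : Q.A}
    (hW : ∀ p ∈ W, IsCycle Q p.2 ∧ p.2 ≠ [a]) :
    Potential.deriv k Q W a * vtx k Q (Q.t a) = Potential.deriv k Q W a := by
  induction W with
  | nil => simp [deriv_nil]
  | cons p W ih =>
      rw [deriv_cons, add_mul, smul_mul_assoc,
        cycDeriv_mul_vtx k Q (hW p (by simp)).1 (hW p (by simp)).2,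
        ih fun q hq => hW q (by simp [hq])]

lemma vtx_mul_deriv (W : Potential k Q) {a : Q.A}
    (hW : ∀ p ∈ W, IsCycle Q p.2 ∧ p.2 ≠ [a]) :
    vtx k Q (Q.s a) * Potential.deriv k Q W a = Potential.deriv k Q W a := by
  induction W with
  | nil => simp [deriv_nil]
  | cons p W ih =>
      rw [deriv_cons, mul_add, mul_smul_comm,
        vtx_mul_cycDeriv k Q (hW p (by simp)).1 (hW p (by simp)).2,
        ih fun q hq => hW q (by simp [hq])]

lemma deriv_eq_zero (W : Potential k Q) {a : Q.A} (h : ∀ p ∈ W, a ∉ p.2) :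
    Potential.deriv k Q W a = 0 := by
  induction W with
  | nil => rfl
  | cons p W ih =>
      rw [deriv_cons, cycDeriv_eq_zero k Q (h p (by simp)), smul_zero, zero_add]
      exact ih fun q hq => h q (by simp [hq])

/-- The key vertex identity for derivatives of a potential consisting of cycles. -/
lemma vertex_identity (W : Potential k Q) (hW : ∀ p ∈ W, IsCycle Q p.2) (v : Q.V) :
    (∑ x : Q.A, if Q.t x = v then arr k Q x * Potential.deriv k Q W x else 0) =
      ∑ x : Q.A, if Q.s x = v then Potential.deriv k Q W x * arr k Q x else 0 := by
  have hL : ∀ x : Q.A, (if Q.t x = v then arr k Q x * Potential.deriv k Q W x else 0) =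
      vtx k Q v * (arr k Q x * Potential.deriv k Q W x) := by
    intro x
    by_cases h : Q.t x = v
    · rw [if_pos h, ← mul_assoc, ← h, vtx_mul_arr_self]
    · rw [if_neg h, ← mul_assoc, vtx_mul_arr_ne k Q (fun hh => h hh.symm), zero_mul]
  have hR : ∀ x : Q.A, (if Q.s x = v then Potential.deriv k Q W x * arr k Q x else 0) =
      (Potential.deriv k Q W x * arr k Q x) * vtx k Q v := by
    intro x
    by_cases h : Q.s x = v
    · rw [if_pos h, mul_assoc, ← h, arr_mul_vtx_self]
    · rw [if_neg h, mul_assoc, arr_mul_vtx_ne k Q h, mul_zero]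
  calc (∑ x : Q.A, if Q.t x = v then arr k Q x * Potential.deriv k Q W x else 0)
      = vtx k Q v * ∑ x : Q.A, arr k Q x * Potential.deriv k Q W x := by
        rw [Finset.mul_sum]; exact Finset.sum_congr rfl fun x _ => hL x
    _ = vtx k Q v * sumRotP k Q W := by rw [sum_arr_deriv]
    _ = sumRotP k Q W * vtx k Q v := vtx_mul_sumRotP k Q W hW v
    _ = (∑ x : Q.A, Potential.deriv k Q W x * arr k Q x) * vtx k Q v := by
        rw [sum_deriv_arr]
    _ = ∑ x : Q.A, if Q.s x = v then Potential.deriv k Q W x * arr k Q x else 0 := by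
        rw [Finset.sum_mul]; exact (Finset.sum_congr rfl fun x _ => hR x).symm
end Aux3

end Quiv
namespace Quiv

section Aux4

lemma isPathFrom_append {R : Quiv} {l₁ l₂ : List R.A} {i j m : R.V}
    (h₁ : IsPathFrom R l₁ j m) (h₂ : IsPathFrom R l₂ i j) :
    IsPathFrom R (l₁ ++ l₂) i m := by
  rcases eq_or_ne l₁ [] with rfl | hne₁
  · have hjm : j = m := h₁.2.1 rfl
    subst hjm
    simpa using h₂
  rcases eq_or_ne l₂ [] with rfl | hne₂
  · have hij : i = j := h₂.2.1 rfl
    subst hij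
    simpa using h₁
  have hne : l₁ ++ l₂ ≠ [] := by simp [hne₁]
  refine ⟨?_, fun h => absurd h hne, fun h => ?_, fun h => ?_⟩
  · refine List.isChain_append.2 ⟨h₁.1, h₂.1, ?_⟩
    intro a ha b hb
    rw [List.getLast?_eq_getLast hne₁, Option.mem_def, Option.some_inj] at ha
    rw [List.head?_eq_head hne₂, Option.mem_def, Option.some_inj] at hb
    subst ha; subst hb
    rw [h₁.2.2.2 hne₁, h₂.2.2.1 hne₂]
  · rw [List.head_append_left hne₁]
    exact h₁.2.2.1 hne₁
  · rw [List.getLast_append_of_ne_nil _ hne₂]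
    exact h₂.2.2.2 hne₂

lemma isPathFrom_singleton {R : Quiv} (x : R.A) : IsPathFrom R [x] (R.s x) (R.t x) :=
  ⟨List.isChain_singleton x, by simp, fun _ => rfl, fun _ => rfl⟩

lemma isPathFrom_flatMap {R : Quiv} {α : Type} {c : List α} (hne : c ≠ [])
    {F : α → List R.A} {sf tf : α → R.V}
    (hcomp : List.Chain' (fun a b => sf a = tf b) c)
    (hF : ∀ a ∈ c, IsPathFrom R (F a) (sf a) (tf a)) :
    IsPathFrom R (c.flatMap F) (sf (c.getLast hne)) (tf (c.head hne)) := by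
  induction c with
  | nil => exact absurd rfl hne
  | cons a c ih =>
      rcases eq_or_ne c [] with rfl | hc
      · simpa using hF a (by simp)
      · have hchain : List.Chain' (fun a b => sf a = tf b) c := hcomp.tail
        have hrel : sf a = tf (c.head hc) := by
          obtain ⟨b, t, rfl⟩ := List.exists_cons_of_ne_nil hc
          exact (List.isChain_cons_cons.1 hcomp).1
        have IH := ih hc hchain (fun x hx => hF x (by simp [hx]))
        have happ := isPathFrom_append (hF a (by simp)) (hrel ▸ IH)
        have h2 : (a :: c).getLast (by simp) = c.getLast hc := List.getLast_cons hc
        have h1 : (a :: c).flatMap F = F a ++ c.flatMap F := by simp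
        rw [show (a :: c).head (by simp) = a from rfl, h2, h1]
        exact happ

lemma isCycle_flatMap {R : Quiv} {α : Type} {c : List α} (hne : c ≠ [])
    {F : α → List R.A} {sf tf : α → R.V}
    (hcomp : List.Chain' (fun a b => sf a = tf b) c)
    (hcyc : sf (c.getLast hne) = tf (c.head hne))
    (hF : ∀ a ∈ c, IsPathFrom R (F a) (sf a) (tf a))
    (hFne : ∀ a ∈ c, F a ≠ []) : IsCycle R (c.flatMap F) := by
  have hP := isPathFrom_flatMap hne hcomp hF
  have hM : c.flatMap F ≠ [] := by
    obtain ⟨a, t, rfl⟩ := List.exists_cons_of_ne_nil hne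
    have : F a ≠ [] := hFne a (by simp)
    simp only [List.flatMap_cons, ne_eq, List.append_eq_nil_iff]
    intro h
    exact this h.1
  apply isCycle_of R hM hP.1
  rw [hP.2.2.1 hM, hP.2.2.2 hM, hcyc]

end Aux4

end Quiv
namespace Quiv

section Aux5

variable (Q : Quiv) (g : Aut Q) (n : ℕ) (C : OrbitChoice Q g)

lemma isPathFrom_genLoc (a : Q.A) :
    IsPathFrom ((sharp Q g n C).loc (isoSet Q g n C)) [genLoc Q g n C a]
      (Q.s (C.genArrow a)) (Q.t (C.genArrow a)) :=
  isPathFrom_singleton (genLoc Q g n C a)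

variable (cd : ConnData Q g n C)

lemma isPathFrom_xiArrList (a : Q.A) :
    IsPathFrom ((sharp Q g n C).loc (isoSet Q g n C)) (xiArrList Q g n C cd a)
      (Q.s a) (Q.t a) := by
  unfold xiArrList
  exact isPathFrom_append
    (isPathFrom_append (cd.endP a) (isPathFrom_genLoc Q g n C a)) (cd.endQc a)

lemma isCycle_xiList {c : List Q.A} (hc : IsCycle Q c) :
    IsCycle ((sharp Q g n C).loc (isoSet Q g n C)) (xiList Q g n C cd c) := by
  unfold xiList
  refine isCycle_flatMap (sf := fun a => Q.s a) (tf := fun a => Q.t a) hc.1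
    (Composable_of_isCycle Q hc) (isCycle_s_getLast Q hc)
    (fun a _ => isPathFrom_xiArrList Q g n C cd a) (fun a _ => by simp [xiArrList])

lemma genLoc_mem_xiList {c : List Q.A} (hne : c ≠ []) :
    ∃ a, genLoc Q g n C a ∈ xiList Q g n C cd c :=
  ⟨c.head hne, List.mem_flatMap.2 ⟨c.head hne, List.head_mem hne, by simp [xiArrList]⟩⟩

lemma xiList_ne_singleton {c : List Q.A} (hne : c ≠ [])
    (x : ((sharp Q g n C).loc (isoSet Q g n C)).A)
    (hx : ∀ a, x ≠ genLoc Q g n C a) : xiList Q g n C cd c ≠ [x] := by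
  intro h
  obtain ⟨a, ha⟩ := genLoc_mem_xiList Q g n C cd hne
  rw [h, List.mem_singleton] at ha
  exact hx a ha.symm

variable (T : Tiling Q)

lemma mem_inducedPotential {p : ℂ × List ((sharp Q g n C).loc (isoSet Q g n C)).A}
    (hp : p ∈ inducedPotential ℂ Q g n C T cd) :
    ∃ v : T.TV, p = ((if T.isWhite v then (1 : ℂ) else -1), xiList Q g n C cd (T.cyc v)) := by
  unfold inducedPotential at hp
  obtain ⟨v, _, rfl⟩ := List.mem_map.1 hp
  exact ⟨v, rfl⟩

lemma inducedPotential_cycles :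
    ∀ p ∈ inducedPotential ℂ Q g n C T cd,
      IsCycle ((sharp Q g n C).loc (isoSet Q g n C)) p.2 := by
  intro p hp
  obtain ⟨v, rfl⟩ := mem_inducedPotential Q g n C cd T hp
  exact isCycle_xiList Q g n C cd (T.cyc_isCycle v)

lemma inducedPotential_ne_single (x : ((sharp Q g n C).loc (isoSet Q g n C)).A)
    (hx : ∀ a, x ≠ genLoc Q g n C a) :
    ∀ p ∈ inducedPotential ℂ Q g n C T cd, p.2 ≠ [x] := by
  intro p hp
  obtain ⟨v, rfl⟩ := mem_inducedPotential Q g n C cd T hp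
  exact xiList_ne_singleton Q g n C cd (T.cyc_isCycle v).1 x hx

lemma inducedPotential_coeff :
    ∀ p ∈ inducedPotential ℂ Q g n C T cd, p.1 ≠ 0 := by
  intro p hp
  obtain ⟨v, rfl⟩ := mem_inducedPotential Q g n C cd T hp
  by_cases h : T.isWhite v <;> simp [h]

lemma deriv_of_not_contains (x : ((sharp Q g n C).loc (isoSet Q g n C)).A)
    (h : ¬ PotContains Q g n C (inducedPotential ℂ Q g n C T cd) x) :
    Potential.deriv ℂ ((sharp Q g n C).loc (isoSet Q g n C))
      (inducedPotential ℂ Q g n C T cd) x = 0 := by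
  apply deriv_eq_zero
  intro p hp hmem
  exact h ⟨p, hp, inducedPotential_coeff Q g n C cd T p hp, hmem⟩

lemma repV_iterate (i : Q.V) (m : ℕ) : C.repV ((⇑g.onV)^[m] i) = C.repV i := by
  induction m with
  | zero => rfl
  | succ m ih => rw [Function.iterate_succ_apply', C.repV_comm, ih]

lemma free_lt_absurd (horder : ∀ j, (⇑g.onV)^[n] j = j)
    (hfree : Aut.FreeVertexOrbits Q g n) {i : Q.V} {m m' : ℕ}
    (hm' : m' < n) (hlt : m < m') (h : (⇑g.onV)^[m] i = (⇑g.onV)^[m'] i) : False := by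
  have h2 : (⇑g.onV)^[n - m' + m] i = (⇑g.onV)^[n - m' + m'] i := by
    rw [Function.iterate_add_apply, Function.iterate_add_apply, h]
  have h3 : n - m' + m' = n := Nat.sub_add_cancel (le_of_lt hm')
  rw [h3, horder i] at h2
  exact hfree i (n - m' + m) (by omega) (by omega) h2

lemma free_eq (horder : ∀ j, (⇑g.onV)^[n] j = j)
    (hfree : Aut.FreeVertexOrbits Q g n) {i i' : Q.V}
    (hi : C.repV i = i) (hi' : C.repV i' = i') {m m' : ℕ} (hm : m < n) (hm' : m' < n)
    (h : (⇑g.onV)^[m] i = (⇑g.onV)^[m'] i') : i = i' ∧ m = m' := by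
  have hii : i = i' := by
    have := congrArg C.repV h
    rwa [repV_iterate, repV_iterate, hi, hi'] at this
  subst hii
  refine ⟨rfl, ?_⟩
  rcases Nat.lt_trichotomy m m' with hlt | heq | hgt
  · exact absurd h (fun h => free_lt_absurd Q g n horder hfree hm' hlt h)
  · exact heq
  · exact absurd h.symm (fun h => free_lt_absurd Q g n horder hfree hm hgt h)

end Aux5

end Quiv
namespace Quiv

section Aux6

variable (k : Type) [CommRing k] (Q : Quiv) (S : Set Q.A)

lemma loc_mul_inv (a : ↥S) :
    locMk k Q S (arr k (Q.loc S) (Sum.inl a.1)) * locMk k Q S (arr k (Q.loc S) (Sum.inr a)) =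
      locVtx k Q S (Q.t a.1) := by
  rw [← map_mul]
  exact RingQuot.mkAlgHom_rel k (LocRel.mul_inv a)

lemma loc_inv_mul (a : ↥S) :
    locMk k Q S (arr k (Q.loc S) (Sum.inr a)) * locMk k Q S (arr k (Q.loc S) (Sum.inl a.1)) =
      locVtx k Q S (Q.s a.1) := by
  rw [← map_mul]
  exact RingQuot.mkAlgHom_rel k (LocRel.inv_mul a)

end Aux6

section Aux7

lemma span_mul_closed_left {A : Type} [Ring A] [Algebra ℂ A] {s : Set A}
    (hs : ∀ (c : A), ∀ z ∈ s, c * z ∈ s) (c : A) {x : A}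
    (hx : x ∈ Submodule.span ℂ s) : c * x ∈ Submodule.span ℂ s := by
  induction hx using Submodule.span_induction with
  | mem z hz => exact Submodule.subset_span (hs c z hz)
  | zero => rw [mul_zero]; exact Submodule.zero_mem _
  | add a b _ _ ha hb => rw [mul_add]; exact Submodule.add_mem _ ha hb
  | smul r a _ ha => rw [mul_smul_comm]; exact Submodule.smul_mem _ r ha

lemma span_mul_closed_right {A : Type} [Ring A] [Algebra ℂ A] {s : Set A}
    (hs : ∀ (c : A), ∀ z ∈ s, z * c ∈ s) (c : A) {x : A}
    (hx : x ∈ Submodule.span ℂ s) : x * c ∈ Submodule.span ℂ s := by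
  induction hx using Submodule.span_induction with
  | mem z hz => exact Submodule.subset_span (hs c z hz)
  | zero => rw [zero_mul]; exact Submodule.zero_mem _
  | add a b _ _ ha hb => rw [add_mul]; exact Submodule.add_mem _ ha hb
  | smul r a _ ha => rw [smul_mul_assoc]; exact Submodule.smul_mem _ r ha

end Aux7

section Aux8

variable (Q : Quiv) (g : Aut Q) (n : ℕ) (C : OrbitChoice Q g) (cd : ConnData Q g n C)
  (T : Tiling Q)

/-- The generating set of the ideal: two-sided multiples of derivatives with
respect to generating arrows. -/
def genSet : Set (LocAlg ℂ (sharp Q g n C) (isoSet Q g n C)) :=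
  {z : LocAlg ℂ (sharp Q g n C) (isoSet Q g n C) |
    ∃ p, ∃ q, ∃ a : Q.A, C.genArrow a = a ∧
      z = p * locMk ℂ (sharp Q g n C) (isoSet Q g n C)
            (Potential.deriv ℂ ((sharp Q g n C).loc (isoSet Q g n C))
              (inducedPotential ℂ Q g n C T cd) (genLoc Q g n C a)) * q}

lemma genSet_mul_left (c : LocAlg ℂ (sharp Q g n C) (isoSet Q g n C))
    {z : LocAlg ℂ (sharp Q g n C) (isoSet Q g n C)} (hz : z ∈ genSet Q g n C cd T) :
    c * z ∈ genSet Q g n C cd T := by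
  obtain ⟨p, q, a, ha, rfl⟩ := hz
  exact ⟨c * p, q, a, ha, by rw [mul_assoc, mul_assoc, mul_assoc]⟩

lemma genSet_mul_right (c : LocAlg ℂ (sharp Q g n C) (isoSet Q g n C))
    {z : LocAlg ℂ (sharp Q g n C) (isoSet Q g n C)} (hz : z ∈ genSet Q g n C cd T) :
    z * c ∈ genSet Q g n C cd T := by
  obtain ⟨p, q, a, ha, rfl⟩ := hz
  exact ⟨p, q * c, a, ha, by rw [mul_assoc, mul_assoc]⟩

lemma sum_locA {M : Type} [AddCommMonoid M]
    (F : ((sharp Q g n C).loc (isoSet Q g n C)).A → M) :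
    ∑ x : ((sharp Q g n C).loc (isoSet Q g n C)).A, F x =
      ((∑ b : {a : Q.A // C.genArrow a = a}, F (Sum.inl (Sum.inl b))) +
       (∑ y : {i : Q.V // C.repV i = i} × Fin (n - 1), F (isoArrLoc Q g n C y))) +
      (∑ y : {i : Q.V // C.repV i = i} × Fin (n - 1), F (isoInvLoc Q g n C y)) := by
  rw [show (∑ x : ((sharp Q g n C).loc (isoSet Q g n C)).A, F x) =
      ∑ x : (sharp Q g n C).A ⊕ ↥(isoSet Q g n C), F x from rfl]
  erw [Fintype.sum_sum_type]
  congr 1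
  · rw [show (∑ x : (sharp Q g n C).A, F (Sum.inl x)) =
        ∑ x : {a : Q.A // C.genArrow a = a} ⊕ ({i : Q.V // C.repV i = i} × Fin (n - 1)),
          F (Sum.inl x) from rfl]
    erw [Fintype.sum_sum_type]
    rfl
  · refine Finset.sum_bij'
      (fun (b : ↥(isoSet Q g n C)) (_ : b ∈ Finset.univ) =>
        (Classical.choose b.2 : {i : Q.V // C.repV i = i} × Fin (n - 1)))
      (fun y _ => (⟨Sum.inr y, ⟨y, rfl⟩⟩ : ↥(isoSet Q g n C)))
      (fun _ _ => Finset.mem_univ _) (fun _ _ => Finset.mem_univ _) ?_ ?_ ?_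
    · intro b _
      exact Subtype.ext (Classical.choose_spec b.2)
    · intro y _
      exact Sum.inr_injective
        (Classical.choose_spec (⟨Sum.inr y, ⟨y, rfl⟩⟩ : ↥(isoSet Q g n C)).2)
    · intro b _
      exact (congrArg F (congrArg Sum.inr (Subtype.ext (Classical.choose_spec b.2)))).symm

end Aux8

end Quiv
namespace Quiv

section Main

variable (Q : Quiv) (g : Aut Q) (n : ℕ) (C : OrbitChoice Q g)

lemma cond_iff_eq (horderV : ∀ i, (⇑g.onV)^[n] i = i)
    (hfree : Aut.FreeVertexOrbits Q g n) (y y' : {i : Q.V // C.repV i = i} × Fin (n - 1)) :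
    (⇑g.onV)^[(y'.2 : ℕ)] y'.1.1 = (⇑g.onV)^[(y.2 : ℕ)] y.1.1 ↔ y' = y := by
  constructor
  · intro h
    obtain ⟨h1, h2⟩ := free_eq Q g n C horderV hfree y'.1.2 y.1.2
      (by have := y'.2.isLt; omega) (by have := y.2.isLt; omega) h
    exact Prod.ext (Subtype.ext h1) (Fin.ext h2)
  · rintro rfl
    rfl

lemma cond_succ (horderV : ∀ i, (⇑g.onV)^[n] i = i)
    (hfree : Aut.FreeVertexOrbits Q g n) (y y' : {i : Q.V // C.repV i = i} × Fin (n - 1))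
    (h : (⇑g.onV)^[(y'.2 : ℕ) + 1] y'.1.1 = (⇑g.onV)^[(y.2 : ℕ)] y.1.1) :
    (y'.2 : ℕ) < (y.2 : ℕ) := by
  obtain ⟨h1, h2⟩ := free_eq Q g n C horderV hfree y'.1.2 y.1.2
    (by have := y'.2.isLt; omega) (by have := y.2.isLt; omega) h
  omega

variable (cd : ConnData Q g n C) (T : Tiling Q)

lemma step_aux (horderV : ∀ i, (⇑g.onV)^[n] i = i)
    (hfree : Aut.FreeVertexOrbits Q g n) (y : {i : Q.V // C.repV i = i} × Fin (n - 1))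
    (hNoBoth : ¬ (PotContains Q g n C (inducedPotential ℂ Q g n C T cd) (isoArrLoc Q g n C y) ∧
        PotContains Q g n C (inducedPotential ℂ Q g n C T cd) (isoInvLoc Q g n C y)))
    (IH : ∀ y' : {i : Q.V // C.repV i = i} × Fin (n - 1), (y'.2 : ℕ) < (y.2 : ℕ) →
      (locMk ℂ (sharp Q g n C) (isoSet Q g n C) (Potential.deriv ℂ ((sharp Q g n C).loc (isoSet Q g n C)) (inducedPotential ℂ Q g n C T cd) (isoArrLoc Q g n C y')) ∈ (Submodule.span ℂ (genSet Q g n C cd T)) ∧ locMk ℂ (sharp Q g n C) (isoSet Q g n C) (Potential.deriv ℂ ((sharp Q g n C).loc (isoSet Q g n C)) (inducedPotential ℂ Q g n C T cd) (isoInvLoc Q g n C y')) ∈ (Submodule.span ℂ (genSet Q g n C cd T)))) :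
    locMk ℂ (sharp Q g n C) (isoSet Q g n C) (Potential.deriv ℂ ((sharp Q g n C).loc (isoSet Q g n C)) (inducedPotential ℂ Q g n C T cd) (isoArrLoc Q g n C y)) ∈ (Submodule.span ℂ (genSet Q g n C cd T)) ∧ locMk ℂ (sharp Q g n C) (isoSet Q g n C) (Potential.deriv ℂ ((sharp Q g n C).loc (isoSet Q g n C)) (inducedPotential ℂ Q g n C T cd) (isoInvLoc Q g n C y)) ∈ (Submodule.span ℂ (genSet Q g n C cd T)) := by
  classical
  have hJl : ∀ (c x : LocAlg ℂ (sharp Q g n C) (isoSet Q g n C)), x ∈ (Submodule.span ℂ (genSet Q g n C cd T)) → c * x ∈ (Submodule.span ℂ (genSet Q g n C cd T)) :=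
    fun c x hx => span_mul_closed_left (fun c z hz => genSet_mul_left Q g n C cd T c hz) c hx
  have hJr : ∀ (c x : LocAlg ℂ (sharp Q g n C) (isoSet Q g n C)), x ∈ (Submodule.span ℂ (genSet Q g n C cd T)) → x * c ∈ (Submodule.span ℂ (genSet Q g n C cd T)) :=
    fun c x hx => span_mul_closed_right (fun c z hz => genSet_mul_right Q g n C cd T c hz) c hx
  have hgen : ∀ (a : Q.A), C.genArrow a = a →
      (locMk ℂ (sharp Q g n C) (isoSet Q g n C) (Potential.deriv ℂ ((sharp Q g n C).loc (isoSet Q g n C)) (inducedPotential ℂ Q g n C T cd) (genLoc Q g n C a))) ∈ (Submodule.span ℂ (genSet Q g n C cd T)) :=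
    fun a ha => Submodule.subset_span ⟨1, 1, a, ha, by rw [one_mul, mul_one]⟩
  have hcyc := inducedPotential_cycles Q g n C cd T
  have h0 := vertex_identity ℂ ((sharp Q g n C).loc (isoSet Q g n C)) (inducedPotential ℂ Q g n C T cd) hcyc ((⇑g.onV)^[(y.2 : ℕ)] y.1.1)
  have hEQ := congrArg (locMk ℂ (sharp Q g n C) (isoSet Q g n C)) h0
  rw [map_sum, map_sum] at hEQ
  simp only [apply_ite (locMk ℂ (sharp Q g n C) (isoSet Q g n C)), map_mul, map_zero] at hEQ
  rw [sum_locA Q g n C, sum_locA Q g n C] at hEQ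
  -- evaluate the two singleton sums
  have hT3 : (∑ y' : {i : Q.V // C.repV i = i} × Fin (n - 1),
      if ((sharp Q g n C).loc (isoSet Q g n C)).t (isoInvLoc Q g n C y') = (⇑g.onV)^[(y.2 : ℕ)] y.1.1 then
        locMk ℂ (sharp Q g n C) (isoSet Q g n C) (arr ℂ ((sharp Q g n C).loc (isoSet Q g n C)) (isoInvLoc Q g n C y')) * locMk ℂ (sharp Q g n C) (isoSet Q g n C) (Potential.deriv ℂ ((sharp Q g n C).loc (isoSet Q g n C)) (inducedPotential ℂ Q g n C T cd) (isoInvLoc Q g n C y')) else 0) =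
      locMk ℂ (sharp Q g n C) (isoSet Q g n C) (arr ℂ ((sharp Q g n C).loc (isoSet Q g n C)) (isoInvLoc Q g n C y)) * locMk ℂ (sharp Q g n C) (isoSet Q g n C) (Potential.deriv ℂ ((sharp Q g n C).loc (isoSet Q g n C)) (inducedPotential ℂ Q g n C T cd) (isoInvLoc Q g n C y)) := by
    exact (Finset.sum_congr rfl (fun y' _ =>
      if_congr (cond_iff_eq Q g n C horderV hfree y y') rfl rfl)).trans <| Fintype.sum_ite_eq' y
      (fun y' => locMk ℂ (sharp Q g n C) (isoSet Q g n C) (arr ℂ ((sharp Q g n C).loc (isoSet Q g n C)) (isoInvLoc Q g n C y')) * locMk ℂ (sharp Q g n C) (isoSet Q g n C) (Potential.deriv ℂ ((sharp Q g n C).loc (isoSet Q g n C)) (inducedPotential ℂ Q g n C T cd) (isoInvLoc Q g n C y')))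
  have hS2 : (∑ y' : {i : Q.V // C.repV i = i} × Fin (n - 1),
      if ((sharp Q g n C).loc (isoSet Q g n C)).s (isoArrLoc Q g n C y') = (⇑g.onV)^[(y.2 : ℕ)] y.1.1 then
        locMk ℂ (sharp Q g n C) (isoSet Q g n C) (Potential.deriv ℂ ((sharp Q g n C).loc (isoSet Q g n C)) (inducedPotential ℂ Q g n C T cd) (isoArrLoc Q g n C y')) * locMk ℂ (sharp Q g n C) (isoSet Q g n C) (arr ℂ ((sharp Q g n C).loc (isoSet Q g n C)) (isoArrLoc Q g n C y')) else 0) =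
      locMk ℂ (sharp Q g n C) (isoSet Q g n C) (Potential.deriv ℂ ((sharp Q g n C).loc (isoSet Q g n C)) (inducedPotential ℂ Q g n C T cd) (isoArrLoc Q g n C y)) * locMk ℂ (sharp Q g n C) (isoSet Q g n C) (arr ℂ ((sharp Q g n C).loc (isoSet Q g n C)) (isoArrLoc Q g n C y)) := by
    exact (Finset.sum_congr rfl (fun y' _ =>
      if_congr (cond_iff_eq Q g n C horderV hfree y y') rfl rfl)).trans <| Fintype.sum_ite_eq' y
      (fun y' => locMk ℂ (sharp Q g n C) (isoSet Q g n C) (Potential.deriv ℂ ((sharp Q g n C).loc (isoSet Q g n C)) (inducedPotential ℂ Q g n C T cd) (isoArrLoc Q g n C y')) * locMk ℂ (sharp Q g n C) (isoSet Q g n C) (arr ℂ ((sharp Q g n C).loc (isoSet Q g n C)) (isoArrLoc Q g n C y')))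
  rw [hT3, hS2] at hEQ
  -- junk sums lie in the ideal
  have hT1 : (∑ b : {a : Q.A // C.genArrow a = a},
      if ((sharp Q g n C).loc (isoSet Q g n C)).t (Sum.inl (Sum.inl b)) = (⇑g.onV)^[(y.2 : ℕ)] y.1.1 then
        locMk ℂ (sharp Q g n C) (isoSet Q g n C) (arr ℂ ((sharp Q g n C).loc (isoSet Q g n C)) (Sum.inl (Sum.inl b))) * locMk ℂ (sharp Q g n C) (isoSet Q g n C) (Potential.deriv ℂ ((sharp Q g n C).loc (isoSet Q g n C)) (inducedPotential ℂ Q g n C T cd) (Sum.inl (Sum.inl b))) else 0) ∈ (Submodule.span ℂ (genSet Q g n C cd T)) := by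
    apply Submodule.sum_mem
    intro b _
    by_cases hb : ((sharp Q g n C).loc (isoSet Q g n C)).t (Sum.inl (Sum.inl b)) = (⇑g.onV)^[(y.2 : ℕ)] y.1.1
    · rw [if_pos hb]
      have hbe : (Sum.inl (Sum.inl b) : ((sharp Q g n C).loc (isoSet Q g n C)).A) = genLoc Q g n C b.1 :=
        congrArg (fun z => Sum.inl (Sum.inl z)) (Subtype.ext b.2.symm)
      rw [hbe]
      exact hJl _ _ (hgen b.1 b.2)
    · rw [if_neg hb]
      exact Submodule.zero_mem _
  have hS1 : (∑ b : {a : Q.A // C.genArrow a = a},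
      if ((sharp Q g n C).loc (isoSet Q g n C)).s (Sum.inl (Sum.inl b)) = (⇑g.onV)^[(y.2 : ℕ)] y.1.1 then
        locMk ℂ (sharp Q g n C) (isoSet Q g n C) (Potential.deriv ℂ ((sharp Q g n C).loc (isoSet Q g n C)) (inducedPotential ℂ Q g n C T cd) (Sum.inl (Sum.inl b))) * locMk ℂ (sharp Q g n C) (isoSet Q g n C) (arr ℂ ((sharp Q g n C).loc (isoSet Q g n C)) (Sum.inl (Sum.inl b))) else 0) ∈ (Submodule.span ℂ (genSet Q g n C cd T)) := by
    apply Submodule.sum_mem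
    intro b _
    by_cases hb : ((sharp Q g n C).loc (isoSet Q g n C)).s (Sum.inl (Sum.inl b)) = (⇑g.onV)^[(y.2 : ℕ)] y.1.1
    · rw [if_pos hb]
      have hbe : (Sum.inl (Sum.inl b) : ((sharp Q g n C).loc (isoSet Q g n C)).A) = genLoc Q g n C b.1 :=
        congrArg (fun z => Sum.inl (Sum.inl z)) (Subtype.ext b.2.symm)
      rw [hbe]
      exact hJr _ _ (hgen b.1 b.2)
    · rw [if_neg hb]
      exact Submodule.zero_mem _
  have hT2 : (∑ y' : {i : Q.V // C.repV i = i} × Fin (n - 1),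
      if ((sharp Q g n C).loc (isoSet Q g n C)).t (isoArrLoc Q g n C y') = (⇑g.onV)^[(y.2 : ℕ)] y.1.1 then
        locMk ℂ (sharp Q g n C) (isoSet Q g n C) (arr ℂ ((sharp Q g n C).loc (isoSet Q g n C)) (isoArrLoc Q g n C y')) * locMk ℂ (sharp Q g n C) (isoSet Q g n C) (Potential.deriv ℂ ((sharp Q g n C).loc (isoSet Q g n C)) (inducedPotential ℂ Q g n C T cd) (isoArrLoc Q g n C y')) else 0) ∈ (Submodule.span ℂ (genSet Q g n C cd T)) := by
    apply Submodule.sum_mem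
    intro y' _
    by_cases hb : ((sharp Q g n C).loc (isoSet Q g n C)).t (isoArrLoc Q g n C y') = (⇑g.onV)^[(y.2 : ℕ)] y.1.1
    · rw [if_pos hb]
      exact hJl _ _ (IH y' (cond_succ Q g n C horderV hfree y y' hb)).1
    · rw [if_neg hb]
      exact Submodule.zero_mem _
  have hS3 : (∑ y' : {i : Q.V // C.repV i = i} × Fin (n - 1),
      if ((sharp Q g n C).loc (isoSet Q g n C)).s (isoInvLoc Q g n C y') = (⇑g.onV)^[(y.2 : ℕ)] y.1.1 then
        locMk ℂ (sharp Q g n C) (isoSet Q g n C) (Potential.deriv ℂ ((sharp Q g n C).loc (isoSet Q g n C)) (inducedPotential ℂ Q g n C T cd) (isoInvLoc Q g n C y')) * locMk ℂ (sharp Q g n C) (isoSet Q g n C) (arr ℂ ((sharp Q g n C).loc (isoSet Q g n C)) (isoInvLoc Q g n C y')) else 0) ∈ (Submodule.span ℂ (genSet Q g n C cd T)) := by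
    apply Submodule.sum_mem
    intro y' _
    by_cases hb : ((sharp Q g n C).loc (isoSet Q g n C)).s (isoInvLoc Q g n C y') = (⇑g.onV)^[(y.2 : ℕ)] y.1.1
    · rw [if_pos hb]
      exact hJr _ _ (IH y' (cond_succ Q g n C horderV hfree y y' hb)).2
    · rw [if_neg hb]
      exact Submodule.zero_mem _
  -- relation and absorption facts
  have hrelA : locMk ℂ (sharp Q g n C) (isoSet Q g n C) (arr ℂ ((sharp Q g n C).loc (isoSet Q g n C)) (isoArrLoc Q g n C y)) * locMk ℂ (sharp Q g n C) (isoSet Q g n C) (arr ℂ ((sharp Q g n C).loc (isoSet Q g n C)) (isoInvLoc Q g n C y)) =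
      locMk ℂ (sharp Q g n C) (isoSet Q g n C) (vtx ℂ ((sharp Q g n C).loc (isoSet Q g n C)) (((sharp Q g n C).loc (isoSet Q g n C)).t (isoArrLoc Q g n C y))) :=
    loc_mul_inv ℂ (sharp Q g n C) (isoSet Q g n C) ⟨Sum.inr y, ⟨y, rfl⟩⟩
  have hrelI : locMk ℂ (sharp Q g n C) (isoSet Q g n C) (arr ℂ ((sharp Q g n C).loc (isoSet Q g n C)) (isoArrLoc Q g n C y)) * locMk ℂ (sharp Q g n C) (isoSet Q g n C) (arr ℂ ((sharp Q g n C).loc (isoSet Q g n C)) (isoInvLoc Q g n C y)) =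
      locMk ℂ (sharp Q g n C) (isoSet Q g n C) (vtx ℂ ((sharp Q g n C).loc (isoSet Q g n C)) (((sharp Q g n C).loc (isoSet Q g n C)).s (isoInvLoc Q g n C y))) :=
    loc_mul_inv ℂ (sharp Q g n C) (isoSet Q g n C) ⟨Sum.inr y, ⟨y, rfl⟩⟩
  have hnsA : ∀ p ∈ (inducedPotential ℂ Q g n C T cd), p.2 ≠ [isoArrLoc Q g n C y] :=
    inducedPotential_ne_single Q g n C cd T (isoArrLoc Q g n C y)
      (fun a h => Sum.inr_ne_inl (Sum.inl_injective h))
  have hnsI : ∀ p ∈ (inducedPotential ℂ Q g n C T cd), p.2 ≠ [isoInvLoc Q g n C y] :=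
    inducedPotential_ne_single Q g n C cd T (isoInvLoc Q g n C y)
      (fun a h => Sum.inr_ne_inl h)
  have habsA : locMk ℂ (sharp Q g n C) (isoSet Q g n C) (Potential.deriv ℂ ((sharp Q g n C).loc (isoSet Q g n C)) (inducedPotential ℂ Q g n C T cd) (isoArrLoc Q g n C y)) *
      locMk ℂ (sharp Q g n C) (isoSet Q g n C) (vtx ℂ ((sharp Q g n C).loc (isoSet Q g n C)) (((sharp Q g n C).loc (isoSet Q g n C)).t (isoArrLoc Q g n C y))) = locMk ℂ (sharp Q g n C) (isoSet Q g n C) (Potential.deriv ℂ ((sharp Q g n C).loc (isoSet Q g n C)) (inducedPotential ℂ Q g n C T cd) (isoArrLoc Q g n C y)) := by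
    rw [← map_mul]
    exact congrArg (locMk ℂ (sharp Q g n C) (isoSet Q g n C))
      (deriv_mul_vtx ℂ ((sharp Q g n C).loc (isoSet Q g n C)) (inducedPotential ℂ Q g n C T cd) (fun p hp => ⟨hcyc p hp, hnsA p hp⟩))
  have habsI : locMk ℂ (sharp Q g n C) (isoSet Q g n C) (vtx ℂ ((sharp Q g n C).loc (isoSet Q g n C)) (((sharp Q g n C).loc (isoSet Q g n C)).s (isoInvLoc Q g n C y))) *
      locMk ℂ (sharp Q g n C) (isoSet Q g n C) (Potential.deriv ℂ ((sharp Q g n C).loc (isoSet Q g n C)) (inducedPotential ℂ Q g n C T cd) (isoInvLoc Q g n C y)) = locMk ℂ (sharp Q g n C) (isoSet Q g n C) (Potential.deriv ℂ ((sharp Q g n C).loc (isoSet Q g n C)) (inducedPotential ℂ Q g n C T cd) (isoInvLoc Q g n C y)) := by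
    rw [← map_mul]
    exact congrArg (locMk ℂ (sharp Q g n C) (isoSet Q g n C))
      (vtx_mul_deriv ℂ ((sharp Q g n C).loc (isoSet Q g n C)) (inducedPotential ℂ Q g n C T cd) (fun p hp => ⟨hcyc p hp, hnsI p hp⟩))
  by_cases hA : PotContains Q g n C (inducedPotential ℂ Q g n C T cd) (isoArrLoc Q g n C y)
  · -- then the inverse arrow does not occur in the potential
    have hB : ¬ PotContains Q g n C (inducedPotential ℂ Q g n C T cd) (isoInvLoc Q g n C y) := fun hB => hNoBoth ⟨hA, hB⟩
    have hz : Potential.deriv ℂ ((sharp Q g n C).loc (isoSet Q g n C)) (inducedPotential ℂ Q g n C T cd) (isoInvLoc Q g n C y) = 0 :=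
      deriv_of_not_contains Q g n C cd T (isoInvLoc Q g n C y) hB
    have hz' : locMk ℂ (sharp Q g n C) (isoSet Q g n C) (Potential.deriv ℂ ((sharp Q g n C).loc (isoSet Q g n C)) (inducedPotential ℂ Q g n C T cd) (isoInvLoc Q g n C y)) = 0 := by rw [hz, map_zero]
    rw [hz', mul_zero, add_zero] at hEQ
    have hYJsum : (locMk ℂ (sharp Q g n C) (isoSet Q g n C) (Potential.deriv ℂ ((sharp Q g n C).loc (isoSet Q g n C)) (inducedPotential ℂ Q g n C T cd) (isoArrLoc Q g n C y)) * locMk ℂ (sharp Q g n C) (isoSet Q g n C) (arr ℂ ((sharp Q g n C).loc (isoSet Q g n C)) (isoArrLoc Q g n C y))) ∈ (Submodule.span ℂ (genSet Q g n C cd T)) := by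
      have h6 := eq_sub_of_add_eq' (eq_sub_of_add_eq hEQ.symm)
      rw [h6]
      exact Submodule.sub_mem _ (Submodule.sub_mem _ (Submodule.add_mem _ hT1 hT2) hS3) hS1
    constructor
    · -- d iso ∈ J
      have hrec : locMk ℂ (sharp Q g n C) (isoSet Q g n C) (Potential.deriv ℂ ((sharp Q g n C).loc (isoSet Q g n C)) (inducedPotential ℂ Q g n C T cd) (isoArrLoc Q g n C y)) =
          (locMk ℂ (sharp Q g n C) (isoSet Q g n C) (Potential.deriv ℂ ((sharp Q g n C).loc (isoSet Q g n C)) (inducedPotential ℂ Q g n C T cd) (isoArrLoc Q g n C y)) * locMk ℂ (sharp Q g n C) (isoSet Q g n C) (arr ℂ ((sharp Q g n C).loc (isoSet Q g n C)) (isoArrLoc Q g n C y))) *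
            locMk ℂ (sharp Q g n C) (isoSet Q g n C) (arr ℂ ((sharp Q g n C).loc (isoSet Q g n C)) (isoInvLoc Q g n C y)) := by
        rw [mul_assoc, hrelA, habsA]
      rw [hrec]
      exact hJr _ _ hYJsum
    · rw [hz']
      exact Submodule.zero_mem _
  · have hz : Potential.deriv ℂ ((sharp Q g n C).loc (isoSet Q g n C)) (inducedPotential ℂ Q g n C T cd) (isoArrLoc Q g n C y) = 0 :=
      deriv_of_not_contains Q g n C cd T (isoArrLoc Q g n C y) hA
    have hz' : locMk ℂ (sharp Q g n C) (isoSet Q g n C) (Potential.deriv ℂ ((sharp Q g n C).loc (isoSet Q g n C)) (inducedPotential ℂ Q g n C T cd) (isoArrLoc Q g n C y)) = 0 := by rw [hz, map_zero]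
    rw [hz', zero_mul, add_zero] at hEQ
    have hXJsum : (locMk ℂ (sharp Q g n C) (isoSet Q g n C) (arr ℂ ((sharp Q g n C).loc (isoSet Q g n C)) (isoInvLoc Q g n C y)) * locMk ℂ (sharp Q g n C) (isoSet Q g n C) (Potential.deriv ℂ ((sharp Q g n C).loc (isoSet Q g n C)) (inducedPotential ℂ Q g n C T cd) (isoInvLoc Q g n C y))) ∈ (Submodule.span ℂ (genSet Q g n C cd T)) := by
      have h5 := eq_sub_of_add_eq' hEQ
      rw [h5]
      exact Submodule.sub_mem _ (Submodule.add_mem _ hS1 hS3) (Submodule.add_mem _ hT1 hT2)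
    refine ⟨by rw [hz']; exact Submodule.zero_mem _, ?_⟩
    have hrec : locMk ℂ (sharp Q g n C) (isoSet Q g n C) (Potential.deriv ℂ ((sharp Q g n C).loc (isoSet Q g n C)) (inducedPotential ℂ Q g n C T cd) (isoInvLoc Q g n C y)) =
        locMk ℂ (sharp Q g n C) (isoSet Q g n C) (arr ℂ ((sharp Q g n C).loc (isoSet Q g n C)) (isoArrLoc Q g n C y)) *
          (locMk ℂ (sharp Q g n C) (isoSet Q g n C) (arr ℂ ((sharp Q g n C).loc (isoSet Q g n C)) (isoInvLoc Q g n C y)) * locMk ℂ (sharp Q g n C) (isoSet Q g n C) (Potential.deriv ℂ ((sharp Q g n C).loc (isoSet Q g n C)) (inducedPotential ℂ Q g n C T cd) (isoInvLoc Q g n C y))) := by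
      rw [← mul_assoc, hrelI, habsI]
    rw [hrec]
    exact hJl _ _ hXJsum

end Main

end Quiv
namespace Quiv

theorem main_aux (Q : Quiv) (T : Tiling Q) (g : Aut Q) (n : ℕ)
    (horderV : ∀ i, (⇑g.onV)^[n] i = i)
    (hfree : Aut.FreeVertexOrbits Q g n)
    (C : OrbitChoice Q g) (cd : ConnData Q g n C)
    (hNoBoth : ∀ y : {i : Q.V // C.repV i = i} × Fin (n - 1),
      ¬ (PotContains Q g n C (inducedPotential ℂ Q g n C T cd) (isoArrLoc Q g n C y) ∧
         PotContains Q g n C (inducedPotential ℂ Q g n C T cd) (isoInvLoc Q g n C y))) :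
    ∀ y : {i : Q.V // C.repV i = i} × Fin (n - 1),
      locMk ℂ (sharp Q g n C) (isoSet Q g n C) (Potential.deriv ℂ ((sharp Q g n C).loc (isoSet Q g n C)) (inducedPotential ℂ Q g n C T cd) (isoArrLoc Q g n C y)) ∈ (Submodule.span ℂ (genSet Q g n C cd T)) ∧ locMk ℂ (sharp Q g n C) (isoSet Q g n C) (Potential.deriv ℂ ((sharp Q g n C).loc (isoSet Q g n C)) (inducedPotential ℂ Q g n C T cd) (isoInvLoc Q g n C y)) ∈ (Submodule.span ℂ (genSet Q g n C cd T)) := by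
  have key : ∀ m : ℕ, ∀ y : {i : Q.V // C.repV i = i} × Fin (n - 1), (y.2 : ℕ) ≤ m →
      (locMk ℂ (sharp Q g n C) (isoSet Q g n C) (Potential.deriv ℂ ((sharp Q g n C).loc (isoSet Q g n C)) (inducedPotential ℂ Q g n C T cd) (isoArrLoc Q g n C y)) ∈ (Submodule.span ℂ (genSet Q g n C cd T)) ∧ locMk ℂ (sharp Q g n C) (isoSet Q g n C) (Potential.deriv ℂ ((sharp Q g n C).loc (isoSet Q g n C)) (inducedPotential ℂ Q g n C T cd) (isoInvLoc Q g n C y)) ∈ (Submodule.span ℂ (genSet Q g n C cd T))) := by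
    intro m
    induction m with
    | zero =>
        intro y hy
        exact step_aux Q g n C cd T horderV hfree y (hNoBoth y)
          (fun y' hlt => absurd hlt (by omega))
    | succ m ih =>
        intro y hy
        exact step_aux Q g n C cd T horderV hfree y (hNoBoth y)
          (fun y' hlt => ih y' (by omega))
  intro y
  exact key (y.2 : ℕ) y le_rfl

end Quiv
open Quiv in
/-- The relations `∂W'/∂r_{i_u,t}` (resp. `∂W'/∂r_{i_u,t}⁻¹`)
lie in the two-sided ideal of `ℂQ'` generated by the relations `∂W'/∂a` for the
generating arrows `a`; i.e. each derivative of `W'` with respect to an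
isomorphism arrow (or its inverse) is a sum of elements `p·(∂W'/∂a)·q`. -/
theorem statement_8 (Q : Quiv) (T : Quiv.Tiling Q) (g : Quiv.TAut Q T) (n : ℕ)
    (hn : 0 < n)
    (horder : Quiv.Aut.OrderDvd Q g.toAut n)
    (horderTV : ∀ v, (⇑g.onTV)^[n] v = v)
    (hfree : Quiv.Aut.FreeVertexOrbits Q g.toAut n)
    (C : Quiv.OrbitChoice Q g.toAut)
    (cd : Quiv.ConnData Q g.toAut n C)
    (hNoBoth : ∀ y : {i : Q.V // C.repV i = i} × Fin (n - 1),
      ¬ (PotContains Q g.toAut n C (inducedPotential ℂ Q g.toAut n C T cd)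
            (isoArrLoc Q g.toAut n C y) ∧
         PotContains Q g.toAut n C (inducedPotential ℂ Q g.toAut n C T cd)
            (isoInvLoc Q g.toAut n C y))) :
    ∀ y : {i : Q.V // C.repV i = i} × Fin (n - 1),
      locMk ℂ (sharp Q g.toAut n C) (isoSet Q g.toAut n C)
          (Potential.deriv ℂ ((sharp Q g.toAut n C).loc (isoSet Q g.toAut n C))
            (inducedPotential ℂ Q g.toAut n C T cd) (isoArrLoc Q g.toAut n C y)) ∈
        Submodule.span ℂ {z : LocAlg ℂ (sharp Q g.toAut n C) (isoSet Q g.toAut n C) |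
          ∃ p, ∃ q, ∃ a : Q.A, C.genArrow a = a ∧
            z = p * locMk ℂ (sharp Q g.toAut n C) (isoSet Q g.toAut n C)
                  (Potential.deriv ℂ ((sharp Q g.toAut n C).loc (isoSet Q g.toAut n C))
                    (inducedPotential ℂ Q g.toAut n C T cd) (genLoc Q g.toAut n C a)) * q} ∧
      locMk ℂ (sharp Q g.toAut n C) (isoSet Q g.toAut n C)
          (Potential.deriv ℂ ((sharp Q g.toAut n C).loc (isoSet Q g.toAut n C))
            (inducedPotential ℂ Q g.toAut n C T cd) (isoInvLoc Q g.toAut n C y)) ∈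
        Submodule.span ℂ {z : LocAlg ℂ (sharp Q g.toAut n C) (isoSet Q g.toAut n C) |
          ∃ p, ∃ q, ∃ a : Q.A, C.genArrow a = a ∧
            z = p * locMk ℂ (sharp Q g.toAut n C) (isoSet Q g.toAut n C)
                  (Potential.deriv ℂ ((sharp Q g.toAut n C).loc (isoSet Q g.toAut n C))
                    (inducedPotential ℂ Q g.toAut n C T cd) (genLoc Q g.toAut n C a)) * q} := by
  intro y
  exact Quiv.main_aux Q T g.toAut n horder.1 hfree C cd hNoBoth y
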